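/- arXiv:1310.5849 — 2 statements merged into one kernel-verified Lean document; each statement's English description precedes it below -/
import Mathlib

section
/- Let λ, μ > 0. Then for every k ∈ ℤ and t ≥ 0 the series Σ_{n∈ℤ} n·p_{k,n}(t;λ,μ) converges absolutely and its sum equals k; i.e., the mean of the process at any time equals the initial state. -/
open scoped BigOperators

/-- Inner binomial sum `∑_{k=0}^{n-m} C(n,k) C(n,k+m) ρ^{-2k-m}`. -/
noncomputable def innerSum (ρ : ℝ) (m n : ℕ) : ℝ :=
  ∑ k ∈ Finset.range (n - m + 1),
    (n.choose k : ℝ) * (n.choose (k + m) : ℝ) * ρ ^ (-(2 * (k : ℤ) + (m : ℤ)))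

/-- Series `∑_{n≥m} [x^{2n}/(2n)! + c·x^{2n+1}/(2n+1)!]·innerSum ρ m n`. -/
noncomputable def evenSeries (x c ρ : ℝ) (m : ℕ) : ℝ :=
  ∑' j : ℕ,
    ((x ^ (2 * (m + j)) / (2 * (m + j)).factorial) +
      c * (x ^ (2 * (m + j) + 1) / (2 * (m + j) + 1).factorial)) * innerSum ρ m (m + j)

/-- Series `∑_{n≥m} x^{2n+1}/(2n+1)!·innerSum ρ m n`. -/
noncomputable def oddSeries (x ρ : ℝ) (m : ℕ) : ℝ :=
  ∑' j : ℕ,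
    (x ^ (2 * (m + j) + 1) / (2 * (m + j) + 1).factorial) * innerSum ρ m (m + j)

/-- `p_{2l,2r}(t;λ,μ)`. -/
noncomputable def pEE (lam mu t : ℝ) (l r : ℤ) : ℝ :=
  Real.exp (-(lam + mu) * t) *
    evenSeries (lam * t) ((mu - lam) / lam) (lam / mu) (r - l).natAbs

/-- `p_{2l,2r+1}(t;λ,μ)`. -/
noncomputable def pEO (lam mu t : ℝ) (l r : ℤ) : ℝ :=
  Real.exp (-(lam + mu) * t) *
    (oddSeries (lam * t) (lam / mu) (r - l).natAbs +
      oddSeries (lam * t) (lam / mu) (r - l + 1).natAbs)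

/-- `p_{2l+1,2r}(t;λ,μ)`. -/
noncomputable def pOE (lam mu t : ℝ) (l r : ℤ) : ℝ :=
  Real.exp (-(lam + mu) * t) *
    (oddSeries (mu * t) (mu / lam) (r - l - 1).natAbs +
      oddSeries (mu * t) (mu / lam) (r - l).natAbs)

/-- `p_{2l+1,2r+1}(t;λ,μ)`. -/
noncomputable def pOO (lam mu t : ℝ) (l r : ℤ) : ℝ :=
  Real.exp (-(lam + mu) * t) *
    evenSeries (mu * t) ((lam - mu) / mu) (mu / lam) (r - l).natAbs

/-- Transition probability `p_{k,n}(t;λ,μ)`, by parity of the states. -/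
noncomputable def transP (lam mu t : ℝ) (k n : ℤ) : ℝ :=
  if k % 2 = 0 then
    if n % 2 = 0 then pEE lam mu t (k / 2) (n / 2)
    else pEO lam mu t (k / 2) ((n - 1) / 2)
  else
    if n % 2 = 0 then pOE lam mu t ((k - 1) / 2) (n / 2)
    else pOO lam mu t ((k - 1) / 2) ((n - 1) / 2)

/-- `h(z) = √((μz²+λ)(λz²+μ))`. -/
noncomputable def hFun (lam mu z : ℝ) : ℝ := Real.sqrt ((mu * z ^ 2 + lam) * (lam * z ^ 2 + mu))

namespace MeanAux

noncomputable def Aq (a : ℝ) (m n : ℕ) : ℝ :=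
  ∑ k ∈ Finset.range (n - m + 1), (n.choose k : ℝ) * (n.choose (k + m) : ℝ) * a ^ (2 * k + m)

lemma Aq_eq_full (a : ℝ) (m n : ℕ) :
    Aq a m n = ∑ j ∈ Finset.range (n + 1),
      (n.choose j : ℝ) * (n.choose (j + m) : ℝ) * a ^ (2 * j + m) := by
  apply Finset.sum_subset
  · intro j hj
    simp only [Finset.mem_range] at hj ⊢
    omega
  · intro j _ hj2
    simp only [Finset.mem_range] at hj2
    have : n < j + m := by omega
    simp [Nat.choose_eq_zero_of_lt this]

lemma Aq_nonneg {a : ℝ} (ha : 0 ≤ a) (m n : ℕ) : 0 ≤ Aq a m n := by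
  apply Finset.sum_nonneg
  intro k _
  positivity

lemma sum_Aq (a : ℝ) (n : ℕ) :
    ∑ m ∈ Finset.range (n + 1), (if m = 0 then (1:ℝ) else 2) * Aq a m n
      = (1 + a) ^ (2 * n) := by
  classical
  set f : ℕ → ℕ → ℝ := fun i j => (n.choose i : ℝ) * (n.choose j : ℝ) * a ^ (i + j) with hf
  have hsq : (1 + a) ^ (2 * n)
      = ∑ p ∈ Finset.range (n+1) ×ˢ Finset.range (n+1), f p.1 p.2 := by
    have h1 : (1 + a) ^ (2 * n) = ((1+a) ^ n) * ((1+a)^n) := by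
      rw [two_mul, pow_add]
    have h2 : (1 + a) ^ n = ∑ i ∈ Finset.range (n+1), (n.choose i : ℝ) * a ^ i := by
      rw [add_comm (1:ℝ) a, add_pow]
      refine Finset.sum_congr rfl fun i _ => ?_
      ring
    rw [h1, h2, Finset.sum_mul_sum, Finset.sum_product]
    refine Finset.sum_congr rfl fun i _ => Finset.sum_congr rfl fun j _ => ?_
    simp only [hf]
    rw [pow_add]
    ring
  -- triangles with difference in L
  have htri : ∀ (L : Finset ℕ), L ⊆ Finset.range (n+1) →
      ∑ p ∈ (Finset.range (n+1) ×ˢ Finset.range (n+1)).filter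
          (fun p => p.2 ≤ p.1 ∧ p.1 - p.2 ∈ L), f p.1 p.2
        = ∑ m ∈ L, Aq a m n := by
    intro L hL
    have hR : ∑ m ∈ L, Aq a m n
        = ∑ p ∈ L.sigma (fun m => Finset.range (n - m + 1)), f (p.2 + p.1) p.2 := by
      rw [Finset.sum_sigma]
      refine Finset.sum_congr rfl fun m _ => ?_
      unfold Aq
      refine Finset.sum_congr rfl fun j _ => ?_
      simp only [hf]
      rw [show 2 * j + m = j + m + j by ring]
      rw [show j + m + j = j + (j + m) by ring, pow_add, pow_add]
      ring
    rw [hR]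
    refine (Finset.sum_nbij' (fun p => ((p.2 + p.1 : ℕ), (p.2 : ℕ)))
      (fun q => (⟨q.1 - q.2, q.2⟩ : Σ _ : ℕ, ℕ)) ?_ ?_ ?_ ?_ ?_).symm
    · intro p hp
      simp only [Finset.mem_sigma, Finset.mem_range] at hp
      have := hL hp.1
      simp only [Finset.mem_range] at this
      simp only [Finset.mem_filter, Finset.mem_product, Finset.mem_range]
      refine ⟨⟨by omega, by omega⟩, by omega, ?_⟩
      have : p.2 + p.1 - p.2 = p.1 := by omega
      rw [this]
      exact hp.1
    · intro q hq
      simp only [Finset.mem_filter, Finset.mem_product, Finset.mem_range] at hq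
      simp only [Finset.mem_sigma, Finset.mem_range]
      refine ⟨hq.2.2, ?_⟩
      have := hL hq.2.2
      simp only [Finset.mem_range] at this
      omega
    · intro p hp
      simp only [Finset.mem_sigma, Finset.mem_range] at hp
      have h1 : p.2 + p.1 - p.2 = p.1 := by omega
      simp [h1]
    · intro q hq
      simp only [Finset.mem_filter, Finset.mem_product, Finset.mem_range] at hq
      have h2 : q.2 + (q.1 - q.2) = q.1 := by omega
      show (q.2 + (q.1 - q.2), q.2) = q
      rw [h2]
    · intro p hp
      rfl
  -- swap for upper triangle
  have hswap : ∑ p ∈ (Finset.range (n+1) ×ˢ Finset.range (n+1)).filter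
        (fun p => ¬ p.2 ≤ p.1), f p.1 p.2
      = ∑ p ∈ (Finset.range (n+1) ×ˢ Finset.range (n+1)).filter
        (fun p => p.2 ≤ p.1 ∧ p.1 - p.2 ∈ Finset.Ico 1 (n+1)), f p.1 p.2 := by
    refine Finset.sum_nbij' (fun p => (p.2, p.1)) (fun p => (p.2, p.1)) ?_ ?_ ?_ ?_ ?_
    · intro p hp
      simp only [Finset.mem_filter, Finset.mem_product, Finset.mem_range,
        Finset.mem_Ico] at hp ⊢
      omega
    · intro p hp
      simp only [Finset.mem_filter, Finset.mem_product, Finset.mem_range,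
        Finset.mem_Ico] at hp ⊢
      omega
    · intro p _; rfl
    · intro p _; rfl
    · intro p _
      simp only [hf]
      rw [show p.2 + p.1 = p.1 + p.2 by ring]
      ring
  -- full lower triangle filter equals (difference in range (n+1)) filter
  have hfull : (Finset.range (n+1) ×ˢ Finset.range (n+1)).filter (fun p => p.2 ≤ p.1)
      = (Finset.range (n+1) ×ˢ Finset.range (n+1)).filter
          (fun p => p.2 ≤ p.1 ∧ p.1 - p.2 ∈ Finset.range (n+1)) := by
    apply Finset.filter_congr
    intro p hp
    simp only [Finset.mem_product, Finset.mem_range] at hp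
    simp only [Finset.mem_range]
    constructor
    · intro h; exact ⟨h, by omega⟩
    · intro h; exact h.1
  have hsplit := Finset.sum_filter_add_sum_filter_not
    (Finset.range (n+1) ×ˢ Finset.range (n+1)) (fun p => p.2 ≤ p.1) (fun p => f p.1 p.2)
  have hIco : Finset.Ico 1 (n+1) ⊆ Finset.range (n+1) := by
    intro m hm; simp only [Finset.mem_Ico] at hm; simp only [Finset.mem_range]; omega
  have hw : ∑ m ∈ Finset.range (n + 1), (if m = 0 then (1:ℝ) else 2) * Aq a m n
      = ∑ m ∈ Finset.range (n+1), Aq a m n + ∑ m ∈ Finset.Ico 1 (n+1), Aq a m n := by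
    have h1 : ∀ m ∈ Finset.range (n+1),
        (if m = 0 then (1:ℝ) else 2) * Aq a m n
          = Aq a m n + (if m ≠ 0 then Aq a m n else 0) := by
      intro m _
      by_cases hm : m = 0 <;> simp [hm] <;> ring
    rw [Finset.sum_congr rfl h1, Finset.sum_add_distrib]
    congr 1
    rw [Finset.sum_ite, Finset.sum_const_zero, add_zero]
    apply Finset.sum_congr _ (fun _ _ => rfl)
    ext m
    simp only [Finset.mem_filter, Finset.mem_range, Finset.mem_Ico]
    omega
  rw [hw, hsq, ← hsplit, hswap, hfull, htri _ (Finset.Subset.refl _), htri _ hIco]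


lemma Aq_le {a : ℝ} (ha : 0 ≤ a) (m n : ℕ) : Aq a m n ≤ (1 + a) ^ (2 * n) := by
  rcases le_or_gt m n with h | h
  · rw [← sum_Aq a n]
    have h1 : Aq a m n ≤ (if m = 0 then (1:ℝ) else 2) * Aq a m n := by
      have := Aq_nonneg ha m n
      split <;> nlinarith
    refine h1.trans ?_
    apply Finset.single_le_sum (f := fun m => (if m = 0 then (1:ℝ) else 2) * Aq a m n)
    · intro i _
      have := Aq_nonneg ha i n
      split <;> nlinarith
    · simp only [Finset.mem_range]
      omega
  · have h0 : Aq a m n = 0 := by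
      unfold Aq
      have h1 : n - m + 1 = 1 := by omega
      rw [h1]
      simp [Nat.choose_eq_zero_of_lt h]
    rw [h0]
    positivity

lemma innerSum_eq {ρ : ℝ} (hρ : 0 < ρ) (m n : ℕ) : innerSum ρ m n = Aq ρ⁻¹ m n := by
  unfold innerSum Aq
  refine Finset.sum_congr rfl fun k _ => ?_
  congr 1
  have h1 : (-(2 * (k:ℤ) + (m:ℤ))) = -(((2 * k + m : ℕ) : ℤ)) := by push_cast; ring
  rw [h1, zpow_neg, ← inv_zpow, zpow_natCast]

noncomputable def gfun (coef : ℕ → ℝ) (a : ℝ) (m : ℕ) : ℝ :=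
  ∑' j : ℕ, coef (m + j) * Aq a m (m + j)

lemma evenSeries_eq {x c ρ : ℝ} (hρ : 0 < ρ) (m : ℕ) :
    evenSeries x c ρ m = gfun
      (fun n => x ^ (2 * n) / (2 * n).factorial + c * (x ^ (2 * n + 1) / (2 * n + 1).factorial))
      ρ⁻¹ m := by
  unfold evenSeries gfun
  exact tsum_congr fun j => by rw [innerSum_eq hρ]

lemma oddSeries_eq {x ρ : ℝ} (hρ : 0 < ρ) (m : ℕ) :
    oddSeries x ρ m = gfun (fun n => x ^ (2 * n + 1) / (2 * n + 1).factorial) ρ⁻¹ m := by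
  unfold oddSeries gfun
  exact tsum_congr fun j => by rw [innerSum_eq hρ]

lemma pow_succ_div_fact_le {x : ℝ} (hx : 0 ≤ x) (n : ℕ) :
    x ^ (2 * n + 1) / (2 * n + 1).factorial ≤ x * (x ^ (2 * n) / (2 * n).factorial) := by
  rw [pow_succ, mul_comm (x ^ (2*n)) x, mul_div_assoc]
  apply mul_le_mul_of_nonneg_left _ hx
  apply div_le_div_of_nonneg_left (by positivity)
    (by exact_mod_cast Nat.factorial_pos (2*n))
    (by exact_mod_cast Nat.factorial_le (Nat.le_succ (2*n)))

lemma coefE_bound {x a : ℝ} (c : ℝ) (hx : 0 ≤ x) (ha : 0 ≤ a) (n : ℕ) :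
    |x ^ (2 * n) / (2 * n).factorial + c * (x ^ (2 * n + 1) / (2 * n + 1).factorial)|
        * (1 + a) ^ (2 * n)
      ≤ (1 + |c| * x) * ((x * (1 + a)) ^ (2 * n) / (2 * n).factorial) := by
  have h1 : |x ^ (2 * n) / (2 * n).factorial + c * (x ^ (2 * n + 1) / (2 * n + 1).factorial)|
      ≤ (1 + |c| * x) * (x ^ (2 * n) / (2 * n).factorial) := by
    refine (abs_add_le _ _).trans ?_
    rw [abs_of_nonneg (by positivity), abs_mul]
    have h2 := pow_succ_div_fact_le hx n
    have h3 : |x ^ (2*n+1) / ((2*n+1).factorial : ℝ)| = x ^ (2*n+1) / ((2*n+1).factorial : ℝ) :=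
      abs_of_nonneg (by positivity)
    rw [h3]
    have h4 : |c| * (x ^ (2*n+1)/(2*n+1).factorial) ≤ |c| * (x * (x^(2*n)/(2*n).factorial)) :=
      mul_le_mul_of_nonneg_left h2 (abs_nonneg c)
    have h5 : (1 + |c| * x) * (x ^ (2*n) / ((2*n).factorial : ℝ))
        = x ^ (2*n) / ((2*n).factorial : ℝ)
          + |c| * (x * (x ^ (2*n) / ((2*n).factorial : ℝ))) := by ring
    rw [h5]
    linarith [h4]
  calc |x ^ (2 * n) / (2 * n).factorial + c * (x ^ (2 * n + 1) / (2 * n + 1).factorial)|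
        * (1 + a) ^ (2 * n)
      ≤ ((1 + |c| * x) * (x ^ (2 * n) / (2 * n).factorial)) * (1 + a) ^ (2 * n) :=
        mul_le_mul_of_nonneg_right h1 (by positivity)
    _ = (1 + |c| * x) * ((x * (1 + a)) ^ (2 * n) / (2 * n).factorial) := by
        rw [mul_pow]
        ring

lemma coefO_bound {x a : ℝ} (hx : 0 ≤ x) (ha : 0 ≤ a) (n : ℕ) :
    |x ^ (2 * n + 1) / (2 * n + 1).factorial| * (1 + a) ^ (2 * n)
      ≤ x * ((x * (1 + a)) ^ (2 * n) / (2 * n).factorial) := by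
  rw [abs_of_nonneg (by positivity)]
  calc x ^ (2 * n + 1) / (2 * n + 1).factorial * (1 + a) ^ (2 * n)
      ≤ x * (x ^ (2 * n) / (2 * n).factorial) * (1 + a) ^ (2 * n) :=
        mul_le_mul_of_nonneg_right (pow_succ_div_fact_le hx n) (by positivity)
    _ = x * ((x * (1 + a)) ^ (2 * n) / (2 * n).factorial) := by
        rw [mul_pow]; ring

lemma hasSum_coefE {x a : ℝ} (c : ℝ) (ha : 0 ≤ a) :
    HasSum (fun n : ℕ =>
        (x ^ (2 * n) / (2 * n).factorial + c * (x ^ (2 * n + 1) / (2 * n + 1).factorial))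
          * (1 + a) ^ (2 * n))
      (Real.cosh (x * (1 + a)) + (c / (1 + a)) * Real.sinh (x * (1 + a))) := by
  have h1a : (0:ℝ) < 1 + a := by linarith
  have h := (Real.hasSum_cosh (x * (1 + a))).add
    ((Real.hasSum_sinh (x * (1 + a))).mul_left (c / (1 + a)))
  have heq : (fun n : ℕ => (x * (1+a)) ^ (2*n) / (2*n).factorial
      + (c / (1+a)) * ((x * (1+a)) ^ (2*n+1) / (2*n+1).factorial))
      = (fun n : ℕ =>
        (x ^ (2 * n) / (2 * n).factorial + c * (x ^ (2 * n + 1) / (2 * n + 1).factorial))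
          * (1 + a) ^ (2 * n)) := by
    funext n
    have f1 : ((2*n).factorial : ℝ) ≠ 0 := by positivity
    have f2 : ((2*n+1).factorial : ℝ) ≠ 0 := by positivity
    rw [mul_pow, mul_pow]
    rw [pow_succ x (2*n), pow_succ (1+a) (2*n)]
    field_simp
  rw [← heq]
  exact h

lemma hasSum_coefO {x a : ℝ} (ha : 0 ≤ a) :
    HasSum (fun n : ℕ =>
        (x ^ (2 * n + 1) / (2 * n + 1).factorial) * (1 + a) ^ (2 * n))
      ((1 + a)⁻¹ * Real.sinh (x * (1 + a))) := by
  have h1a : (0:ℝ) < 1 + a := by linarith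
  have h := (Real.hasSum_sinh (x * (1 + a))).mul_left (1 + a)⁻¹
  have heq : (fun n : ℕ => (1+a)⁻¹ * ((x * (1+a)) ^ (2*n+1) / (2*n+1).factorial))
      = (fun n : ℕ => (x ^ (2 * n + 1) / (2 * n + 1).factorial) * (1 + a) ^ (2 * n)) := by
    funext n
    have f2 : ((2*n+1).factorial : ℝ) ≠ 0 := by positivity
    rw [mul_pow, pow_succ x (2*n), pow_succ (1+a) (2*n)]
    field_simp
  rw [← heq]
  exact h

lemma core_summable {y : ℝ} (hy : 0 ≤ y) (c : ℝ) (hc : 0 ≤ c) :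
    Summable (fun m : ℤ =>
      (|(m:ℝ)| + c) * (y ^ (2 * m.natAbs) / (2 * m.natAbs).factorial)) := by
  have hnat : Summable (fun m : ℕ => ((m:ℝ) + c) * (y ^ (2 * m) / (2 * m).factorial)) := by
    have hmaj : Summable (fun m : ℕ =>
        (2*y^2) ^ m / m.factorial + c * ((y^2) ^ m / m.factorial)) :=
      (Real.summable_pow_div_factorial (2*y^2)).add
        ((Real.summable_pow_div_factorial (y^2)).mul_left c)
    refine Summable.of_nonneg_of_le (fun m => by positivity) (fun m => ?_) hmaj
    · have hd : y ^ (2*m) / ((2*m).factorial : ℝ) ≤ y ^ (2*m) / (m.factorial : ℝ) :=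
        div_le_div_of_nonneg_left (by positivity)
          (by exact_mod_cast Nat.factorial_pos m)
          (by exact_mod_cast Nat.factorial_le (by omega : m ≤ 2*m))
      have h2 : ((m:ℝ) + c) * (y ^ (2*m) / (2*m).factorial)
          ≤ ((m:ℝ) + c) * (y ^ (2*m) / m.factorial) :=
        mul_le_mul_of_nonneg_left hd (by positivity)
      refine h2.trans ?_
      have hm2 : (m:ℝ) ≤ 2 ^ m := by
        exact_mod_cast (Nat.lt_two_pow_self (n := m)).le
      have hpow : y ^ (2*m) = (y^2) ^ m := by rw [← pow_mul, mul_comm]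
      rw [hpow, mul_pow, add_mul]
      apply add_le_add
      · rw [mul_div_assoc]
        exact mul_le_mul_of_nonneg_right hm2 (by positivity)
      · exact le_rfl
  apply Summable.of_nat_of_neg_add_one
    (f := fun m : ℤ => (|(m:ℝ)| + c) * (y ^ (2 * m.natAbs) / (2 * m.natAbs).factorial))
  · apply hnat.congr
    intro m
    have hm : |(((m:ℕ):ℤ):ℝ)| = (m:ℝ) := by
      rw [Int.cast_natCast]
      exact abs_of_nonneg (by positivity)
    rw [hm, Int.natAbs_natCast]
  · have h5 : Summable (fun n : ℕ => (((n:ℝ) + 1) + c)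
        * (y ^ (2 * (n+1)) / (2 * (n+1)).factorial)) := by
      have := (summable_nat_add_iff 1).mpr hnat
      apply this.congr
      intro m
      push_cast
      ring_nf
    apply h5.congr
    intro n
    have h6 : ((-((n:ℤ) + 1) : ℤ)).natAbs = n + 1 := by omega
    rw [h6]
    congr 1
    have h7 : ((-((n:ℤ)+1) : ℤ) : ℝ) = -((n:ℝ)+1) := by push_cast; ring
    rw [h7, abs_neg, abs_of_nonneg (by positivity : (0:ℝ) ≤ (n:ℝ)+1)]

lemma helper_summable {y D : ℝ} (hy : 0 ≤ y) (hD : 0 ≤ D) (e : ℤ) {v u : ℤ → ℝ}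
    (hv : ∀ r : ℤ, |v r| ≤ D * (y ^ (2 * (r - e).natAbs) / (2 * (r - e).natAbs).factorial))
    (hu : ∀ r : ℤ, |u r| ≤ 2 * |(r:ℝ)| + 1) :
    Summable (fun r : ℤ => |u r * v r|) := by
  have hcore := core_summable hy (|(e:ℝ)| + 1) (by positivity)
  have hmaj : Summable (fun r : ℤ => (2*D) * ((|((r - e : ℤ):ℝ)| + (|(e:ℝ)| + 1))
      * (y ^ (2 * (r - e).natAbs) / (2 * (r - e).natAbs).factorial))) := by
    have hinj : Function.Injective (fun r : ℤ => r - e) := fun p q h => by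
      simp only at h; omega
    exact (hcore.mul_left (2*D)).comp_injective hinj
  apply Summable.of_nonneg_of_le (fun r => abs_nonneg _) _ hmaj
  intro r
  rw [abs_mul]
  have hfac : (0:ℝ) ≤ y ^ (2 * (r - e).natAbs) / (2 * (r - e).natAbs).factorial := by
    positivity
  have h1 : |u r| * |v r| ≤ (2 * |(r:ℝ)| + 1)
      * (D * (y ^ (2 * (r - e).natAbs) / (2 * (r - e).natAbs).factorial)) :=
    mul_le_mul (hu r) (hv r) (abs_nonneg _) (by positivity)
  refine h1.trans ?_
  have h2 : 2 * |(r:ℝ)| + 1 ≤ 2 * (|((r - e : ℤ):ℝ)| + (|(e:ℝ)| + 1)) := by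
    push_cast
    have := abs_sub_abs_le_abs_sub (r:ℝ) (e:ℝ)
    have h3 := abs_nonneg ((r:ℝ) - e)
    have h4 := abs_nonneg (e:ℝ)
    have h5 : |(r:ℝ)| ≤ |(r:ℝ) - e| + |(e:ℝ)| := by
      have := abs_add_le ((r:ℝ) - e) (e:ℝ)
      simpa using this
    linarith
  calc (2 * |(r:ℝ)| + 1) * (D * (y ^ (2 * (r-e).natAbs) / (2 * (r-e).natAbs).factorial))
      ≤ (2 * (|((r - e : ℤ):ℝ)| + (|(e:ℝ)| + 1)))
        * (D * (y ^ (2 * (r-e).natAbs) / (2 * (r-e).natAbs).factorial)) :=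
        mul_le_mul_of_nonneg_right h2 (by positivity)
    _ = _ := by ring

lemma hasSum_int_even_odd {f : ℤ → ℝ} {A B : ℝ}
    (h₁ : HasSum (fun r : ℤ => f (2*r)) A) (h₂ : HasSum (fun r : ℤ => f (2*r+1)) B) :
    HasSum f (A + B) := by
  have hinj₁ : Function.Injective (fun r : ℤ => 2*r) := fun p q h => by
    simp only at h; omega
  have hinj₂ : Function.Injective (fun r : ℤ => 2*r+1) := fun p q h => by
    simp only at h; omega
  have hcompl : IsCompl (Set.range (fun r : ℤ => 2*r)) (Set.range (fun r : ℤ => 2*r+1)) := by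
    constructor
    · rw [Set.disjoint_left]
      rintro x ⟨p, rfl⟩ ⟨q, hq⟩
      have hq' : 2*q+1 = 2*p := hq
      omega
    · rw [codisjoint_iff_le_sup]
      intro n _
      rcases Int.even_or_odd n with ⟨p, hp⟩ | ⟨p, hp⟩
      · apply Set.mem_union_left
        exact ⟨p, show 2*p = n by omega⟩
      · apply Set.mem_union_right
        exact ⟨p, show 2*p+1 = n by omega⟩
  exact (hinj₁.hasSum_range_iff.mpr h₁).add_isCompl hcompl (hinj₂.hasSum_range_iff.mpr h₂)

lemma summable_int_even_odd {f : ℤ → ℝ}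
    (h₁ : Summable (fun r : ℤ => f (2*r))) (h₂ : Summable (fun r : ℤ => f (2*r+1))) :
    Summable f :=
  (hasSum_int_even_odd h₁.hasSum h₂.hasSum).summable

lemma hasSum_shift {g : ℤ → ℝ} {S : ℝ} (h : HasSum g S) (e : ℤ) :
    HasSum (fun r : ℤ => g (r - e)) S :=
  ((Equiv.subRight e).hasSum_iff (f := g) (a := S)).mpr h


lemma summable_base {z : ℝ} (hz : 0 ≤ z) :
    Summable (fun j : ℕ => z ^ (2 * j) / (2 * j).factorial) := by
  have := (Real.summable_pow_div_factorial z).comp_injective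
    (i := fun j : ℕ => 2 * j) (fun i j h => by simp only at h; omega)
  exact this

lemma tsum_base_le {z : ℝ} (hz : 0 ≤ z) :
    ∑' j : ℕ, z ^ (2 * j) / (2 * j).factorial = Real.cosh z :=
  (Real.hasSum_cosh z).tsum_eq

lemma fact_ineq {z : ℝ} (hz : 0 ≤ z) (m j : ℕ) :
    z ^ (2 * (m + j)) / (2 * (m + j)).factorial
      ≤ (z ^ (2 * m) / (2 * m).factorial) * (z ^ (2 * j) / (2 * j).factorial) := by
  have hfac : ((2 * m).factorial * (2 * j).factorial : ℕ) ≤ (2 * (m + j)).factorial := by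
    have h := Nat.factorial_mul_factorial_dvd_factorial_add (2 * m) (2 * j)
    rw [show 2 * m + 2 * j = 2 * (m + j) by ring] at h
    exact Nat.le_of_dvd (Nat.factorial_pos _) h
  calc z ^ (2 * (m + j)) / ((2 * (m + j)).factorial : ℝ)
      ≤ z ^ (2 * (m + j)) / (((2 * m).factorial * (2 * j).factorial : ℕ) : ℝ) := by
        apply div_le_div_of_nonneg_left (by positivity)
          (by exact_mod_cast Nat.mul_pos (Nat.factorial_pos _) (Nat.factorial_pos _))
          (by exact_mod_cast hfac)
    _ = (z ^ (2 * m) / (2 * m).factorial) * (z ^ (2 * j) / (2 * j).factorial) := by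
        push_cast
        rw [show 2 * (m + j) = 2 * m + 2 * j by ring, pow_add, div_mul_div_comm]

section Gen

variable {a z C : ℝ} {coef : ℕ → ℝ}

variable (ha : 0 ≤ a) (hz : 0 ≤ z) (hC : 0 ≤ C)
  (hcoef : ∀ n, |coef n| * (1 + a) ^ (2 * n) ≤ C * (z ^ (2 * n) / (2 * n).factorial))

include ha hz hC hcoef

lemma slice_bound (m j : ℕ) :
    |coef (m + j) * Aq a m (m + j)|
      ≤ (C * (z ^ (2 * m) / (2 * m).factorial)) * (z ^ (2 * j) / (2 * j).factorial) := by
  rw [abs_mul, abs_of_nonneg (Aq_nonneg ha _ _)]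
  calc |coef (m + j)| * Aq a m (m + j)
      ≤ |coef (m + j)| * (1 + a) ^ (2 * (m + j)) :=
        mul_le_mul_of_nonneg_left (Aq_le ha _ _) (abs_nonneg _)
    _ ≤ C * (z ^ (2 * (m + j)) / (2 * (m + j)).factorial) := hcoef _
    _ ≤ C * ((z ^ (2 * m) / (2 * m).factorial) * (z ^ (2 * j) / (2 * j).factorial)) :=
        mul_le_mul_of_nonneg_left (fact_ineq hz m j) hC
    _ = _ := by ring

lemma slice_summable (m : ℕ) :
    Summable (fun j : ℕ => coef (m + j) * Aq a m (m + j)) := by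
  apply Summable.of_norm_bounded ((summable_base hz).mul_left
    (C * (z ^ (2 * m) / (2 * m).factorial)))
  intro j
  exact slice_bound ha hz hC hcoef m j

lemma gfun_bound (m : ℕ) :
    |gfun coef a m| ≤ (C * Real.cosh z) * (z ^ (2 * m) / (2 * m).factorial) := by
  have hs : Summable (fun j : ℕ => ‖coef (m + j) * Aq a m (m + j)‖) := by
    apply Summable.of_nonneg_of_le (fun j => norm_nonneg _)
      (fun j => slice_bound ha hz hC hcoef m j)
    exact (summable_base hz).mul_left _
  have h1 : |gfun coef a m| ≤ ∑' j : ℕ, ‖coef (m + j) * Aq a m (m + j)‖ :=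
    norm_tsum_le_tsum_norm hs
  have h2 : ∑' j : ℕ, ‖coef (m + j) * Aq a m (m + j)‖ ≤ ∑' j : ℕ,
      (C * (z ^ (2 * m) / (2 * m).factorial)) * (z ^ (2 * j) / (2 * j).factorial) :=
    Summable.tsum_le_tsum (fun j => slice_bound ha hz hC hcoef m j) hs
      ((summable_base hz).mul_left _)
  rw [tsum_mul_left, tsum_base_le hz] at h2
  calc |gfun coef a m| ≤ C * (z ^ (2 * m) / (2 * m).factorial) * Real.cosh z :=
        h1.trans h2
    _ = _ := by ring

lemma gfun_summable : Summable (fun m : ℕ => gfun coef a m) := by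
  apply Summable.of_norm_bounded ((summable_base hz).mul_left (C * Real.cosh z))
  intro m
  exact gfun_bound ha hz hC hcoef m

lemma F_summable :
    Summable (fun p : ℕ × ℕ =>
      (if p.1 = 0 then (1:ℝ) else 2) * (coef (p.1 + p.2) * Aq a p.1 (p.1 + p.2))) := by
  apply Summable.of_norm_bounded
    ((((summable_base hz).mul_of_nonneg (summable_base hz)
      (fun j => by positivity) (fun j => by positivity))).mul_left (2 * C))
  rintro ⟨m, j⟩
  simp only [Real.norm_eq_abs]
  rw [abs_mul]
  have h1 : |if m = 0 then (1:ℝ) else 2| ≤ 2 := by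
    split <;> simp
  calc |if m = 0 then (1:ℝ) else 2| * |coef (m + j) * Aq a m (m + j)|
      ≤ 2 * ((C * (z ^ (2 * m) / (2 * m).factorial)) * (z ^ (2 * j) / (2 * j).factorial)) := by
        apply mul_le_mul h1 (slice_bound ha hz hC hcoef m j) (abs_nonneg _) (by norm_num)
    _ = _ := by ring

lemma gen_hasSum_nat :
    HasSum (fun m : ℕ => (if m = 0 then (1:ℝ) else 2) * gfun coef a m)
      (∑' p : ℕ × ℕ, (if p.1 = 0 then (1:ℝ) else 2) * (coef (p.1 + p.2) * Aq a p.1 (p.1 + p.2))) := by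
  exact (F_summable ha hz hC hcoef).hasSum.prod_fiberwise
    (fun m => ((slice_summable ha hz hC hcoef m).hasSum.mul_left _))

lemma gen_hasSum_coef :
    HasSum (fun n : ℕ => coef n * (1 + a) ^ (2 * n))
      (∑' p : ℕ × ℕ, (if p.1 = 0 then (1:ℝ) else 2) * (coef (p.1 + p.2) * Aq a p.1 (p.1 + p.2))) := by
  set F : ℕ × ℕ → ℝ := fun p =>
    (if p.1 = 0 then (1:ℝ) else 2) * (coef (p.1 + p.2) * Aq a p.1 (p.1 + p.2)) with hFdef
  have hF : Summable F := F_summable ha hz hC hcoef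
  have hFe : HasSum (F ∘ (Finset.HasAntidiagonal.sigmaAntidiagonalEquivProd (A := ℕ))) (∑' p, F p) :=
    (Finset.HasAntidiagonal.sigmaAntidiagonalEquivProd (A := ℕ)).hasSum_iff.mpr hF.hasSum
  apply HasSum.sigma hFe
  intro n
  have hfin : HasSum (fun p : (Finset.HasAntidiagonal.antidiagonal n : Finset (ℕ × ℕ)) => F p.1)
      (∑ p ∈ (Finset.HasAntidiagonal.antidiagonal n).attach, F p.1) := hasSum_fintype _
  have heq : ∑ p ∈ (Finset.HasAntidiagonal.antidiagonal n).attach, F p.1 = coef n * (1 + a) ^ (2 * n) := by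
    rw [Finset.sum_attach (Finset.HasAntidiagonal.antidiagonal n) F]
    have h1 : ∀ p ∈ Finset.HasAntidiagonal.antidiagonal n,
        F p = coef n * ((if p.1 = 0 then (1:ℝ) else 2) * Aq a p.1 n) := by
      intro p hp
      rw [Finset.HasAntidiagonal.mem_antidiagonal] at hp
      simp only [hFdef, hp]
      ring
    rw [Finset.sum_congr rfl h1, ← Finset.mul_sum]
    congr 1
    rw [Finset.Nat.sum_antidiagonal_eq_sum_range_succ_mk]
    exact sum_Aq a n
  rw [← heq]
  exact hfin
set_option maxHeartbeats 1000000 in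
lemma gen_hasSum_int {S : ℝ} (hS : HasSum (fun n : ℕ => coef n * (1 + a) ^ (2 * n)) S) :
    HasSum (fun m : ℤ => gfun coef a m.natAbs) S := by
  have hg : Summable (fun m : ℕ => gfun coef a m) := gfun_summable ha hz hC hcoef
  set Sg := ∑' m : ℕ, gfun coef a m with hSg
  have hgs : HasSum (fun m : ℕ => gfun coef a m) Sg := hg.hasSum
  have h1 := gen_hasSum_nat ha hz hC hcoef
  have h2 := gen_hasSum_coef ha hz hC hcoef
  have hT : S = 2 * Sg - gfun coef a 0 := by
    have h3 : HasSum (fun m : ℕ => (if m = 0 then (1:ℝ) else 2) * gfun coef a m)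
        (2 * Sg - gfun coef a 0) := by
      have h4 : HasSum (fun m : ℕ => 2 * gfun coef a m
          - (if m = 0 then gfun coef a 0 else 0)) (2 * Sg - gfun coef a 0) :=
        (hgs.mul_left 2).sub (hasSum_ite_eq 0 (gfun coef a 0))
      have hfe : (fun m : ℕ => 2 * gfun coef a m - (if m = 0 then gfun coef a 0 else 0))
          = (fun m : ℕ => (if m = 0 then (1:ℝ) else 2) * gfun coef a m) := by
        funext m
        by_cases hm : m = 0 <;> simp [hm] <;> ring
      rw [← hfe]
      exact h4
    exact (hS.unique h2).trans (h1.unique h3)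
  have hnat : HasSum (fun n : ℕ => gfun coef a ((n : ℤ)).natAbs) Sg := by
    simpa using hgs
  have hneg : HasSum (fun n : ℕ => gfun coef a ((-(n + 1) : ℤ)).natAbs) (Sg - gfun coef a 0) := by
    have h5 : HasSum (fun n : ℕ => gfun coef a (n + 1)) (Sg - gfun coef a 0) := by
      rw [hasSum_nat_add_iff 1]
      simpa using hgs
    have h6 : ∀ n : ℕ, ((-((n:ℤ) + 1) : ℤ)).natAbs = n + 1 := fun n => by omega
    simp only [h6]
    exact h5
  have hfin := HasSum.of_nat_of_neg_add_one (f := fun m : ℤ => gfun coef a m.natAbs) hnat hneg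
  have : Sg + (Sg - gfun coef a 0) = S := by rw [hT]; ring
  rw [← this]
  exact hfin

end Gen

lemma evenSeries_row {x a ρ : ℝ} (c : ℝ) (hx : 0 ≤ x) (ha : 0 ≤ a) (hρ : 0 < ρ)
    (hρa : ρ⁻¹ = a) (e : ℤ) :
    HasSum (fun r : ℤ => evenSeries x c ρ (r - e).natAbs)
      (Real.cosh (x * (1 + a)) + (c / (1 + a)) * Real.sinh (x * (1 + a))) := by
  have hz : 0 ≤ x * (1 + a) := by
    apply mul_nonneg hx
    linarith
  have hC : (0:ℝ) ≤ 1 + |c| * x := by positivity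
  have h := gen_hasSum_int ha hz hC (fun n => coefE_bound c hx ha n) (hasSum_coefE c ha)
  have hfe : (fun m : ℤ => gfun
      (fun n => x ^ (2 * n) / (2 * n).factorial + c * (x ^ (2 * n + 1) / (2 * n + 1).factorial))
      a m.natAbs)
      = (fun m : ℤ => evenSeries x c ρ m.natAbs) := by
    funext m
    rw [evenSeries_eq hρ, hρa]
  rw [hfe] at h
  exact hasSum_shift h e

lemma oddSeries_row {x a ρ : ℝ} (hx : 0 ≤ x) (ha : 0 ≤ a) (hρ : 0 < ρ)
    (hρa : ρ⁻¹ = a) (e : ℤ) :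
    HasSum (fun r : ℤ => oddSeries x ρ (r - e).natAbs)
      ((1 + a)⁻¹ * Real.sinh (x * (1 + a))) := by
  have hz : 0 ≤ x * (1 + a) := by
    apply mul_nonneg hx
    linarith
  have h := gen_hasSum_int ha hz hx (fun n => coefO_bound hx ha n) (hasSum_coefO ha)
  have hfe : (fun m : ℤ => gfun
      (fun n => x ^ (2 * n + 1) / (2 * n + 1).factorial) a m.natAbs)
      = (fun m : ℤ => oddSeries x ρ m.natAbs) := by
    funext m
    rw [oddSeries_eq hρ, hρa]
  rw [hfe] at h
  exact hasSum_shift h e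

lemma evenSeries_bound {x a ρ : ℝ} (c : ℝ) (hx : 0 ≤ x) (ha : 0 ≤ a) (hρ : 0 < ρ)
    (hρa : ρ⁻¹ = a) : ∀ m : ℕ,
    |evenSeries x c ρ m| ≤ ((1 + |c| * x) * Real.cosh (x * (1 + a)))
      * ((x * (1 + a)) ^ (2 * m) / (2 * m).factorial) := by
  intro m
  have hz : 0 ≤ x * (1 + a) := by
    apply mul_nonneg hx
    linarith
  have hC : (0:ℝ) ≤ 1 + |c| * x := by positivity
  rw [evenSeries_eq hρ, hρa]
  exact gfun_bound ha hz hC (fun n => coefE_bound c hx ha n) m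

lemma oddSeries_bound {x a ρ : ℝ} (hx : 0 ≤ x) (ha : 0 ≤ a) (hρ : 0 < ρ)
    (hρa : ρ⁻¹ = a) : ∀ m : ℕ,
    |oddSeries x ρ m| ≤ (x * Real.cosh (x * (1 + a)))
      * ((x * (1 + a)) ^ (2 * m) / (2 * m).factorial) := by
  intro m
  have hz : 0 ≤ x * (1 + a) := by
    apply mul_nonneg hx
    linarith
  rw [oddSeries_eq hρ, hρa]
  exact gfun_bound ha hz hx (fun n => coefO_bound hx ha n) m


lemma case_even (lam mu t : ℝ) (hlam : 0 < lam) (hmu : 0 < mu) (ht : 0 ≤ t)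
    (k : ℤ) (hk : k % 2 = 0) :
    HasSum (fun n : ℤ => transP lam mu t k n) 1 ∧
    Summable (fun n : ℤ => |(n : ℝ) * transP lam mu t k n|) := by
  have hx : 0 ≤ lam * t := by positivity
  have ha0 : (0:ℝ) ≤ mu / lam := by positivity
  have hρ : (0:ℝ) < lam / mu := by positivity
  have hρa : (lam / mu)⁻¹ = mu / lam := by rw [inv_div]
  have h1a : (0:ℝ) < 1 + mu / lam := by positivity
  set x := lam * t with hxdef
  set a := mu / lam with hadef
  set ρ := lam / mu with hρdef
  set c := (mu - lam) / lam with hcdef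
  set z := x * (1 + a) with hzdef
  have hz0 : 0 ≤ z := by positivity
  have hzY : z = (lam + mu) * t := by
    rw [hzdef, hxdef, hadef]
    field_simp
  set E := Real.exp (-(lam + mu) * t) with hEdef
  have hE0 : 0 < E := Real.exp_pos _
  set l := k / 2 with hldef
  -- reduction of transP on even/odd sites
  have hPE : ∀ r : ℤ, transP lam mu t k (2*r) = E * evenSeries x c ρ (r - l).natAbs := by
    intro r
    unfold transP
    rw [if_pos hk, if_pos (show (2*r) % 2 = 0 by omega),
      show (2*r)/2 = r by omega]
    rfl
  have hPO : ∀ r : ℤ, transP lam mu t k (2*r+1)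
      = E * (oddSeries x ρ (r - l).natAbs + oddSeries x ρ (r - (l-1)).natAbs) := by
    intro r
    unfold transP
    rw [if_pos hk, if_neg (show ¬((2*r+1) % 2 = 0) by omega),
      show (2*r+1-1)/2 = r by omega]
    unfold pEO
    rw [show r - l + 1 = r - (l - 1) by ring]
  set TE := Real.cosh z + (c / (1 + a)) * Real.sinh z with hTEdef
  set TO := (1 + a)⁻¹ * Real.sinh z with hTOdef
  have h1 : HasSum (fun r : ℤ => transP lam mu t k (2*r)) (E * TE) := by
    simp only [hPE]
    exact (evenSeries_row c hx ha0 hρ hρa l).mul_left E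
  have h2 : HasSum (fun r : ℤ => transP lam mu t k (2*r+1)) (E * (TO + TO)) := by
    simp only [hPO]
    exact ((oddSeries_row hx ha0 hρ hρa l).add (oddSeries_row hx ha0 hρ hρa (l-1))).mul_left E
  have hval : E * TE + E * (TO + TO) = 1 := by
    have hca : c = a - 1 := by
      rw [hcdef, hadef]
      field_simp
    have hze : -(lam + mu) * t = -z := by rw [hzY]; ring
    rw [hTEdef, hTOdef, hca, hEdef, hze, Real.cosh_eq, Real.sinh_eq, Real.exp_neg]
    have he : Real.exp z ≠ 0 := Real.exp_ne_zero z
    field_simp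
    ring
  have hsum : HasSum (fun n : ℤ => transP lam mu t k n) 1 := by
    rw [← hval]
    exact hasSum_int_even_odd h1 h2
  refine ⟨hsum, ?_⟩
  -- summability of |n * P n|
  apply summable_int_even_odd
  · have hbe := evenSeries_bound c hx ha0 hρ hρa
    have := helper_summable (y := z) (D := E * ((1 + |c| * x) * Real.cosh z))
      hz0 (by positivity) l
      (v := fun r : ℤ => transP lam mu t k (2*r))
      (u := fun r : ℤ => ((2*r : ℤ) : ℝ)) ?_ ?_
    · exact this
    · intro r
      show |transP lam mu t k (2*r)| ≤ _
      rw [hPE r, abs_mul, abs_of_pos hE0]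
      calc E * |evenSeries x c ρ (r - l).natAbs|
          ≤ E * (((1 + |c| * x) * Real.cosh z) * (z ^ (2 * (r-l).natAbs) / (2 * (r-l).natAbs).factorial)) :=
            mul_le_mul_of_nonneg_left (hbe _) hE0.le
        _ = _ := by ring
    · intro r
      show |((2*r : ℤ) : ℝ)| ≤ _
      have h9 : ((2*r : ℤ) : ℝ) = 2 * (r:ℝ) := by push_cast; ring
      rw [h9, abs_mul, abs_two]
      linarith [abs_nonneg ((r:ℝ))]
  · have hbo := oddSeries_bound (a := a) hx ha0 hρ hρa
    have hA := helper_summable (y := z) (D := E * (x * Real.cosh z)) hz0 (by positivity) l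
      (v := fun r : ℤ => E * oddSeries x ρ (r - l).natAbs)
      (u := fun r : ℤ => ((2*r+1 : ℤ) : ℝ))
      (fun r => by
        show |E * oddSeries x ρ (r - l).natAbs| ≤ _
        rw [abs_mul, abs_of_pos hE0]
        calc E * |oddSeries x ρ (r - l).natAbs|
            ≤ E * ((x * Real.cosh z) * (z ^ (2 * (r-l).natAbs) / (2 * (r-l).natAbs).factorial)) :=
              mul_le_mul_of_nonneg_left (hbo _) hE0.le
          _ = _ := by ring)
      (fun r => by
        show |((2*r+1 : ℤ) : ℝ)| ≤ _
        have h8 : ((2*r+1 : ℤ) : ℝ) = 2 * (r:ℝ) + 1 := by push_cast; ring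
        rw [h8]
        calc |2 * (r:ℝ) + 1| ≤ |2 * (r:ℝ)| + 1 := by
              have := abs_add_le (2 * (r:ℝ)) 1
              simpa using this
          _ = 2 * |(r:ℝ)| + 1 := by rw [abs_mul, abs_two])
    have hB := helper_summable (y := z) (D := E * (x * Real.cosh z)) hz0 (by positivity) (l-1)
      (v := fun r : ℤ => E * oddSeries x ρ (r - (l-1)).natAbs)
      (u := fun r : ℤ => ((2*r+1 : ℤ) : ℝ))
      (fun r => by
        show |E * oddSeries x ρ (r - (l-1)).natAbs| ≤ _
        rw [abs_mul, abs_of_pos hE0]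
        calc E * |oddSeries x ρ (r - (l-1)).natAbs|
            ≤ E * ((x * Real.cosh z) * (z ^ (2 * (r-(l-1)).natAbs) / (2 * (r-(l-1)).natAbs).factorial)) :=
              mul_le_mul_of_nonneg_left (hbo _) hE0.le
          _ = _ := by ring)
      (fun r => by
        show |((2*r+1 : ℤ) : ℝ)| ≤ _
        have h8 : ((2*r+1 : ℤ) : ℝ) = 2 * (r:ℝ) + 1 := by push_cast; ring
        rw [h8]
        calc |2 * (r:ℝ) + 1| ≤ |2 * (r:ℝ)| + 1 := by
              have := abs_add_le (2 * (r:ℝ)) 1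
              simpa using this
          _ = 2 * |(r:ℝ)| + 1 := by rw [abs_mul, abs_two])
    apply Summable.of_nonneg_of_le (fun r => abs_nonneg _) _ (hA.add hB)
    intro r
    show |((2*r+1 : ℤ) : ℝ) * transP lam mu t k (2*r+1)| ≤ _
    rw [hPO r, mul_add, mul_add]
    exact abs_add_le _ _

lemma case_odd (lam mu t : ℝ) (hlam : 0 < lam) (hmu : 0 < mu) (ht : 0 ≤ t)
    (k : ℤ) (hk : ¬(k % 2 = 0)) :
    HasSum (fun n : ℤ => transP lam mu t k n) 1 ∧
    Summable (fun n : ℤ => |(n : ℝ) * transP lam mu t k n|) := by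
  have hx : 0 ≤ mu * t := by positivity
  have ha0 : (0:ℝ) ≤ lam / mu := by positivity
  have hρ : (0:ℝ) < mu / lam := by positivity
  have hρa : (mu / lam)⁻¹ = lam / mu := by rw [inv_div]
  have h1a : (0:ℝ) < 1 + lam / mu := by positivity
  set x := mu * t with hxdef
  set a := lam / mu with hadef
  set ρ := mu / lam with hρdef
  set c := (lam - mu) / mu with hcdef
  set z := x * (1 + a) with hzdef
  have hz0 : 0 ≤ z := by positivity
  have hzY : z = (lam + mu) * t := by
    rw [hzdef, hxdef, hadef]
    field_simp
    ring
  set E := Real.exp (-(lam + mu) * t) with hEdef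
  have hE0 : 0 < E := Real.exp_pos _
  set l := (k - 1) / 2 with hldef
  have hPE : ∀ r : ℤ, transP lam mu t k (2*r)
      = E * (oddSeries x ρ (r - (l+1)).natAbs + oddSeries x ρ (r - l).natAbs) := by
    intro r
    unfold transP
    rw [if_neg hk, if_pos (show (2*r) % 2 = 0 by omega), show (2*r)/2 = r by omega]
    unfold pOE
    rw [show r - l - 1 = r - (l + 1) by ring]
  have hPO : ∀ r : ℤ, transP lam mu t k (2*r+1) = E * evenSeries x c ρ (r - l).natAbs := by
    intro r
    unfold transP
    rw [if_neg hk, if_neg (show ¬((2*r+1) % 2 = 0) by omega),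
      show (2*r+1-1)/2 = r by omega]
    rfl
  set TE := Real.cosh z + (c / (1 + a)) * Real.sinh z with hTEdef
  set TO := (1 + a)⁻¹ * Real.sinh z with hTOdef
  have h1 : HasSum (fun r : ℤ => transP lam mu t k (2*r)) (E * (TO + TO)) := by
    simp only [hPE]
    exact ((oddSeries_row hx ha0 hρ hρa (l+1)).add (oddSeries_row hx ha0 hρ hρa l)).mul_left E
  have h2 : HasSum (fun r : ℤ => transP lam mu t k (2*r+1)) (E * TE) := by
    simp only [hPO]
    exact (evenSeries_row c hx ha0 hρ hρa l).mul_left E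
  have hval : E * (TO + TO) + E * TE = 1 := by
    have hca : c = a - 1 := by
      rw [hcdef, hadef]
      field_simp
    have hze : -(lam + mu) * t = -z := by rw [hzY]; ring
    rw [hTEdef, hTOdef, hca, hEdef, hze, Real.cosh_eq, Real.sinh_eq, Real.exp_neg]
    have he : Real.exp z ≠ 0 := Real.exp_ne_zero z
    field_simp
    ring
  have hsum : HasSum (fun n : ℤ => transP lam mu t k n) 1 := by
    rw [← hval]
    exact hasSum_int_even_odd h1 h2
  refine ⟨hsum, ?_⟩
  apply summable_int_even_odd
  · have hbo := oddSeries_bound (a := a) hx ha0 hρ hρa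
    have hA := helper_summable (y := z) (D := E * (x * Real.cosh z)) hz0 (by positivity) (l+1)
      (v := fun r : ℤ => E * oddSeries x ρ (r - (l+1)).natAbs)
      (u := fun r : ℤ => ((2*r : ℤ) : ℝ))
      (fun r => by
        show |E * oddSeries x ρ (r - (l+1)).natAbs| ≤ _
        rw [abs_mul, abs_of_pos hE0]
        calc E * |oddSeries x ρ (r - (l+1)).natAbs|
            ≤ E * ((x * Real.cosh z) * (z ^ (2 * (r-(l+1)).natAbs) / (2 * (r-(l+1)).natAbs).factorial)) :=
              mul_le_mul_of_nonneg_left (hbo _) hE0.le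
          _ = _ := by ring)
      (fun r => by
        show |((2*r : ℤ) : ℝ)| ≤ _
        have h9 : ((2*r : ℤ) : ℝ) = 2 * (r:ℝ) := by push_cast; ring
        rw [h9, abs_mul, abs_two]
        linarith [abs_nonneg ((r:ℝ))])
    have hB := helper_summable (y := z) (D := E * (x * Real.cosh z)) hz0 (by positivity) l
      (v := fun r : ℤ => E * oddSeries x ρ (r - l).natAbs)
      (u := fun r : ℤ => ((2*r : ℤ) : ℝ))
      (fun r => by
        show |E * oddSeries x ρ (r - l).natAbs| ≤ _
        rw [abs_mul, abs_of_pos hE0]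
        calc E * |oddSeries x ρ (r - l).natAbs|
            ≤ E * ((x * Real.cosh z) * (z ^ (2 * (r-l).natAbs) / (2 * (r-l).natAbs).factorial)) :=
              mul_le_mul_of_nonneg_left (hbo _) hE0.le
          _ = _ := by ring)
      (fun r => by
        show |((2*r : ℤ) : ℝ)| ≤ _
        have h9 : ((2*r : ℤ) : ℝ) = 2 * (r:ℝ) := by push_cast; ring
        rw [h9, abs_mul, abs_two]
        linarith [abs_nonneg ((r:ℝ))])
    apply Summable.of_nonneg_of_le (fun r => abs_nonneg _) _ (hA.add hB)
    intro r
    show |((2*r : ℤ) : ℝ) * transP lam mu t k (2*r)| ≤ _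
    rw [hPE r, mul_add, mul_add]
    exact abs_add_le _ _
  · have hbe := evenSeries_bound c hx ha0 hρ hρa
    have := helper_summable (y := z) (D := E * ((1 + |c| * x) * Real.cosh z))
      hz0 (by positivity) l
      (v := fun r : ℤ => transP lam mu t k (2*r+1))
      (u := fun r : ℤ => ((2*r+1 : ℤ) : ℝ)) ?_ ?_
    · exact this
    · intro r
      show |transP lam mu t k (2*r+1)| ≤ _
      rw [hPO r, abs_mul, abs_of_pos hE0]
      calc E * |evenSeries x c ρ (r - l).natAbs|
          ≤ E * (((1 + |c| * x) * Real.cosh z) * (z ^ (2 * (r-l).natAbs) / (2 * (r-l).natAbs).factorial)) :=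
            mul_le_mul_of_nonneg_left (hbe _) hE0.le
        _ = _ := by ring
    · intro r
      show |((2*r+1 : ℤ) : ℝ)| ≤ _
      have h8 : ((2*r+1 : ℤ) : ℝ) = 2 * (r:ℝ) + 1 := by push_cast; ring
      rw [h8]
      calc |2 * (r:ℝ) + 1| ≤ |2 * (r:ℝ)| + 1 := by
            have := abs_add_le (2 * (r:ℝ)) 1
            simpa using this
        _ = 2 * |(r:ℝ)| + 1 := by rw [abs_mul, abs_two]

lemma transP_symm (lam mu t : ℝ) (k d : ℤ) :
    transP lam mu t k (k + d) = transP lam mu t k (k - d) := by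
  rcases Int.even_or_odd k with ⟨l, hl⟩ | ⟨l, hl⟩ <;>
    rcases Int.even_or_odd d with ⟨s, hs⟩ | ⟨s, hs⟩
  · -- k even, d even
    have hc : k % 2 = 0 := by omega
    have h1 : (k + d) % 2 = 0 := by omega
    have h2 : (k - d) % 2 = 0 := by omega
    simp only [transP, hc, h1, h2, reduceIte]
    unfold pEE
    have e1 : ((k+d)/2 - k/2).natAbs = ((k-d)/2 - k/2).natAbs := by omega
    rw [e1]
  · -- k even, d odd
    have hc : k % 2 = 0 := by omega
    have h1 : (k + d) % 2 = 1 := by omega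
    have h2 : (k - d) % 2 = 1 := by omega
    simp only [transP, hc, h1, h2, reduceIte]
    unfold pEO
    have e1 : ((k+d-1)/2 - k/2).natAbs = ((k-d-1)/2 - k/2 + 1).natAbs := by omega
    have e2 : ((k+d-1)/2 - k/2 + 1).natAbs = ((k-d-1)/2 - k/2).natAbs := by omega
    rw [e1, e2]
    norm_num
    exact add_comm _ _
  · -- k odd, d even
    have hc : k % 2 = 1 := by omega
    have h1 : (k + d) % 2 = 1 := by omega
    have h2 : (k - d) % 2 = 1 := by omega
    simp only [transP, hc, h1, h2, reduceIte]
    unfold pOO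
    have e1 : ((k+d-1)/2 - (k-1)/2).natAbs = ((k-d-1)/2 - (k-1)/2).natAbs := by omega
    rw [e1]
    norm_num
  · -- k odd, d odd
    have hc : k % 2 = 1 := by omega
    have h1 : (k + d) % 2 = 0 := by omega
    have h2 : (k - d) % 2 = 0 := by omega
    simp only [transP, hc, h1, h2, reduceIte]
    unfold pOE
    have e1 : ((k+d)/2 - (k-1)/2 - 1).natAbs = ((k-d)/2 - (k-1)/2).natAbs := by omega
    have e2 : ((k+d)/2 - (k-1)/2).natAbs = ((k-d)/2 - (k-1)/2 - 1).natAbs := by omega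
    rw [e1, e2]
    norm_num
    exact add_comm _ _


end MeanAux

open MeanAux

/-- The mean of the process at any time equals the initial state. -/
theorem mean_eq_initial_state (lam mu : ℝ) (hlam : 0 < lam) (hmu : 0 < mu)
    (k : ℤ) (t : ℝ) (ht : 0 ≤ t) :
    Summable (fun n : ℤ => |(n : ℝ) * transP lam mu t k n|) ∧
    ∑' n : ℤ, (n : ℝ) * transP lam mu t k n = (k : ℝ) := by
  obtain ⟨hP1, hS⟩ : HasSum (fun n : ℤ => transP lam mu t k n) 1 ∧
      Summable (fun n : ℤ => |(n : ℝ) * transP lam mu t k n|) := by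
    by_cases hk : k % 2 = 0
    · exact case_even lam mu t hlam hmu ht k hk
    · exact case_odd lam mu t hlam hmu ht k hk
  refine ⟨hS, ?_⟩
  set f : ℤ → ℝ := fun n => (n : ℝ) * transP lam mu t k n with hfdef
  have hfs : Summable f := summable_abs_iff.mp hS
  have hinj : Function.Injective (fun d : ℤ => k + d) := fun p q h => by
    simp only at h; omega
  -- reindex by d ↦ k + d
  have he : ∑' n : ℤ, f n = ∑' d : ℤ, f (k + d) := by
    rw [← (Equiv.addLeft k).tsum_eq f]
    rfl
  have hsummand : ∀ d : ℤ, f (k + d)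
      = (k : ℝ) * transP lam mu t k (k + d) + (d : ℝ) * transP lam mu t k (k + d) := by
    intro d
    rw [hfdef]
    push_cast
    ring
  have hs1 : Summable (fun d : ℤ => transP lam mu t k (k + d)) :=
    hP1.summable.comp_injective hinj
  have hs2 : Summable (fun d : ℤ => f (k + d)) := hfs.comp_injective hinj
  have hs3 : Summable (fun d : ℤ => (d : ℝ) * transP lam mu t k (k + d)) := by
    have := hs2.sub (hs1.mul_left (k : ℝ))
    apply this.congr
    intro d
    rw [hsummand d]
    ring
  have hq0 : ∑' d : ℤ, (d : ℝ) * transP lam mu t k (k + d) = 0 := by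
    set q : ℤ → ℝ := fun d => (d : ℝ) * transP lam mu t k (k + d) with hqdef
    have hodd : ∀ d : ℤ, q (-d) = -q d := by
      intro d
      rw [hqdef]
      simp only
      rw [show k + -d = k - d by ring, ← transP_symm lam mu t k d]
      push_cast
      ring
    have hneg : ∑' d : ℤ, q d = ∑' d : ℤ, q (-d) := by
      rw [← (Equiv.neg ℤ).tsum_eq q]
      rfl
    have : ∑' d : ℤ, q (-d) = -∑' d : ℤ, q d := by
      rw [tsum_congr (fun d => hodd d), tsum_neg]
    have h2 := hneg.trans this
    linarith
  have hsum1 : ∑' d : ℤ, transP lam mu t k (k + d) = 1 := by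
    have : HasSum (fun d : ℤ => transP lam mu t k (k + d)) 1 := by
      have := ((Equiv.addLeft k).hasSum_iff
        (f := fun n : ℤ => transP lam mu t k n) (a := 1)).mpr hP1
      exact this
    exact this.tsum_eq
  calc ∑' n : ℤ, f n = ∑' d : ℤ, f (k + d) := he
    _ = ∑' d : ℤ, ((k : ℝ) * transP lam mu t k (k + d)
          + (d : ℝ) * transP lam mu t k (k + d)) := tsum_congr hsummand
    _ = (∑' d : ℤ, (k : ℝ) * transP lam mu t k (k + d))
          + ∑' d : ℤ, (d : ℝ) * transP lam mu t k (k + d) :=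
        Summable.tsum_add (hs1.mul_left _) hs3
    _ = (k : ℝ) * (∑' d : ℤ, transP lam mu t k (k + d)) + 0 := by rw [tsum_mul_left, hq0]
    _ = (k : ℝ) := by rw [hsum1]; ring
end

section
/- Let λ, μ > 0 and s > 0. Define π₀(s) := [(2λ+s)(2μ+s) − A(s)B(s)] / (λ·[s(2μ+s) + A(s)B(s)]), and for every integer n ≥ 1 define π_{2n}(s) := (2μ+s)(λ+s)·(ψ₂²(s))^{n+1} / (λ²·[μ(1−ψ₂²(s)) − s·ψ₂²(s)]) and π_{2n−1}(s) := (λ+s)·(ψ₂²(s))ⁿ·(1+ψ₂²(s)) / (λ·[μ(1−ψ₂²(s)) − s·ψ₂²(s)]). Then the denominators s(2μ+s)+A(s)B(s) and μ(1−ψ₂²(s)) − s·ψ₂²(s) are nonzero, and the family (π_n(s))_{n≥0} satisfies the Laplace-transformed balance equations: (λ+s)·π₀(s) = μ·π₁(s); (2μ+s)·π₁(s) = 1 + λ·π₂(s) + λ·π₀(s); (2λ+s)·π_{2n}(s) = μ·π_{2n−1}(s) + μ·π_{2n+1}(s) for all n ≥ 1; and (2μ+s)·π_{2n−1}(s) =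 λ·π_{2n}(s) + λ·π_{2n−2}(s) for all n ≥ 2. -/
/-- `A(s) = √((a+s)²−a²)` with `a = λ+μ`. -/
noncomputable def Afun (lam mu s : ℝ) : ℝ :=
  Real.sqrt ((lam + mu + s) ^ 2 - (lam + mu) ^ 2)

/-- `B(s) = √((a+s)²−b²)` with `b = λ−μ`. -/
noncomputable def Bfun (lam mu s : ℝ) : ℝ :=
  Real.sqrt ((lam + mu + s) ^ 2 - (lam - mu) ^ 2)

/-- `ψ₂²(s) = (A(s)−B(s))²/(a²−b²)`. -/
noncomputable def psi2sq (lam mu s : ℝ) : ℝ :=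
  (Afun lam mu s - Bfun lam mu s) ^ 2 / ((lam + mu) ^ 2 - (lam - mu) ^ 2)

/-- Laplace transforms `π_n(s)`: `π₀`, and for `n ≥ 1` the values `π_{2n}` and `π_{2n−1}`. -/
noncomputable def piFun (lam mu s : ℝ) : ℕ → ℝ := fun n =>
  if n = 0 then
    ((2 * lam + s) * (2 * mu + s) - Afun lam mu s * Bfun lam mu s) /
      (lam * (s * (2 * mu + s) + Afun lam mu s * Bfun lam mu s))
  else if n % 2 = 0 then
    (2 * mu + s) * (lam + s) * (psi2sq lam mu s) ^ (n / 2 + 1) /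
      (lam ^ 2 * (mu * (1 - psi2sq lam mu s) - s * psi2sq lam mu s))
  else
    (lam + s) * (psi2sq lam mu s) ^ ((n + 1) / 2) * (1 + psi2sq lam mu s) /
      (lam * (mu * (1 - psi2sq lam mu s) - s * psi2sq lam mu s))

lemma key_Q (lam mu s A B p : ℝ) (hAB : A + B ≠ 0)
    (hA2 : A^2 = s*(2*lam+2*mu+s)) (hB2 : B^2 = (2*lam+s)*(2*mu+s))
    (hpe : p*(A+B) = B - A) :
    lam*mu*(1+p^2) = p*(s^2+2*lam*s+2*mu*s+2*lam*mu) := by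
  apply mul_right_cancel₀ (pow_ne_zero 2 hAB)
  linear_combination (lam*mu*(p*(A+B)+(B-A)) - (s^2+2*lam*s+2*mu*s+2*lam*mu)*(A+B))*hpe +
    (2*lam*mu + (s^2+2*lam*s+2*mu*s+2*lam*mu))*hA2 +
    (2*lam*mu - (s^2+2*lam*s+2*mu*s+2*lam*mu))*hB2

lemma key_Dkey (mu s A B p : ℝ) (hpe : p*(A+B) = B - A) :
    (mu*(1-p) - s*p)*(A+B) = (2*mu+s)*A - s*B := by
  linear_combination (-(mu+s))*hpe

lemma key_D1key (lam mu s A B : ℝ)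
    (hA2 : A^2 = s*(2*lam+2*mu+s)) (hB2 : B^2 = (2*lam+s)*(2*mu+s)) :
    2*mu*(s*(2*mu+s) + A*B) = (A+B)*((2*mu+s)*A - s*B) := by
  linear_combination (-(2*mu+s))*hA2 + s*hB2

lemma key_main1 (lam mu s A B p : ℝ) (hAB : A + B ≠ 0)
    (hA2 : A^2 = s*(2*lam+2*mu+s)) (hB2 : B^2 = (2*lam+s)*(2*mu+s))
    (hpe : p*(A+B) = B - A) :
    ((2*lam+s)*(2*mu+s) - A*B) * (mu*(1-p) - s*p) = mu*p*(1+p)*(s*(2*mu+s)+A*B) := by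
  have hDkey := key_Dkey mu s A B p hpe
  have hD1key := key_D1key lam mu s A B hA2 hB2
  apply mul_right_cancel₀ (pow_ne_zero 2 hAB)
  linear_combination (((2*lam+s)*(2*mu+s) - A*B)*(A+B))*hDkey
    + (-(mu*(s*(2*mu+s)+A*B)*((1+p)*(A+B)+(B-A))))*hpe
    + (-(B*(B-A)))*hD1key
    + (-((A+B)*((2*mu+s)*A - s*B)))*hB2

lemma piFun_even (lam mu s : ℝ) (n : ℕ) (hn : n ≠ 0) :
    piFun lam mu s (2*n) = (2 * mu + s) * (lam + s) * (psi2sq lam mu s) ^ (n + 1) /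
      (lam ^ 2 * (mu * (1 - psi2sq lam mu s) - s * psi2sq lam mu s)) := by
  have h0 : 2*n ≠ 0 := by omega
  have h1 : (2*n) % 2 = 0 := by omega
  have h2 : (2*n) / 2 = n := by omega
  simp only [piFun, h0, if_false, h1, if_true, h2, if_pos]

lemma piFun_odd (lam mu s : ℝ) (n : ℕ) (hn : n ≠ 0) :
    piFun lam mu s (2*n-1) = (lam + s) * (psi2sq lam mu s) ^ n * (1 + psi2sq lam mu s) /
      (lam * (mu * (1 - psi2sq lam mu s) - s * psi2sq lam mu s)) := by
  have h0 : 2*n-1 ≠ 0 := by omega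
  have h1 : ¬ ((2*n-1) % 2 = 0) := by omega
  have h2 : (2*n-1+1) / 2 = n := by omega
  simp only [piFun, h0, if_false, h1, h2]

set_option maxHeartbeats 1000000 in
/-- The explicit family `(π_n(s))_{n≥0}` has nonzero denominators and satisfies the
Laplace-transformed balance equations of the reflected process started at state 1. -/
theorem laplace_balance_equations (lam mu s : ℝ) (hlam : 0 < lam) (hmu : 0 < mu) (hs : 0 < s) :
    s * (2 * mu + s) + Afun lam mu s * Bfun lam mu s ≠ 0 ∧
    mu * (1 - psi2sq lam mu s) - s * psi2sq lam mu s ≠ 0 ∧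
    (lam + s) * piFun lam mu s 0 = mu * piFun lam mu s 1 ∧
    (2 * mu + s) * piFun lam mu s 1 = 1 + lam * piFun lam mu s 2 + lam * piFun lam mu s 0 ∧
    (∀ n : ℕ, 1 ≤ n →
      (2 * lam + s) * piFun lam mu s (2 * n) =
        mu * piFun lam mu s (2 * n - 1) + mu * piFun lam mu s (2 * n + 1)) ∧
    (∀ n : ℕ, 2 ≤ n →
      (2 * mu + s) * piFun lam mu s (2 * n - 1) =
        lam * piFun lam mu s (2 * n) + lam * piFun lam mu s (2 * n - 2)) := by
  set A := Afun lam mu s with hAdef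
  set B := Bfun lam mu s with hBdef
  set p := psi2sq lam mu s with hpdef
  have hSA : (0:ℝ) ≤ (lam+mu+s)^2 - (lam+mu)^2 := by nlinarith
  have hSB : (0:ℝ) ≤ (lam+mu+s)^2 - (lam-mu)^2 := by nlinarith
  have hApos : 0 < A := Real.sqrt_pos.mpr (by nlinarith)
  have hBpos : 0 < B := Real.sqrt_pos.mpr (by nlinarith)
  have hA2 : A ^ 2 = s*(2*lam+2*mu+s) := by
    rw [hAdef, Afun, Real.sq_sqrt hSA]; ring
  have hB2 : B ^ 2 = (2*lam+s)*(2*mu+s) := by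
    rw [hBdef, Bfun, Real.sq_sqrt hSB]; ring
  have hABlt : A < B := by nlinarith
  have hABne : A + B ≠ 0 := by positivity
  have hpe : p * (A + B) = B - A := by
    rw [hpdef, psi2sq, ← hAdef, ← hBdef, div_mul_eq_mul_div,
      div_eq_iff (by nlinarith : (lam+mu)^2-(lam-mu)^2 ≠ 0)]
    linear_combination (B - A)*hB2 - (B - A)*hA2
  have hQ := key_Q lam mu s A B p hABne hA2 hB2 hpe
  have hMain1 := key_main1 lam mu s A B p hABne hA2 hB2 hpe
  have hABprod : 0 < A * B := mul_pos hApos hBpos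
  have hD1pos : 0 < s*(2*mu+s) + A*B := by nlinarith
  have hsAB : 0 < (2*mu+s)*A - s*B := by
    nlinarith [hA2, hB2, hApos, hBpos, mul_pos hmu hs, mul_pos hlam hmu,
      mul_pos (mul_pos hmu hs) hs, sq_nonneg ((2*mu+s)*A - s*B), sq_nonneg ((2*mu+s)*A + s*B)]
  have hDkey := key_Dkey mu s A B p hpe
  have hDpos : 0 < mu * (1 - p) - s * p := by nlinarith [hDkey, hApos, hBpos, hsAB]
  have e0 : piFun lam mu s 0 = ((2*lam+s)*(2*mu+s) - A*B)/(lam*(s*(2*mu+s)+A*B)) := by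
    simp [piFun]
    rfl
  have e1 : piFun lam mu s 1 = (lam+s) * p * (1+p) / (lam*(mu*(1-p)-s*p)) := by
    have := piFun_odd lam mu s 1 one_ne_zero
    norm_num at this
    simpa using this
  have e2 : piFun lam mu s 2 = (2*mu+s)*(lam+s)*p^2/(lam^2*(mu*(1-p)-s*p)) := by
    have := piFun_even lam mu s 1 one_ne_zero
    norm_num at this
    simpa using this
  clear_value A B p
  refine ⟨ne_of_gt hD1pos, ne_of_gt hDpos, ?_, ?_, ?_, ?_⟩
  · rw [e0, e1]
    field_simp [hlam.ne', hDpos.ne', hD1pos.ne']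
    linear_combination hMain1
  · rw [e0, e1, e2]
    field_simp [hlam.ne', hDpos.ne', hD1pos.ne']
    linear_combination (-(s*(2*mu+s)+A*B))*hQ + (-lam)*hMain1
  · intro n hn
    obtain ⟨m, rfl⟩ : ∃ m, n = 1 + m := ⟨n - 1, by omega⟩
    have h3 : 2*(1+m)+1 = 2*(2+m)-1 := by omega
    rw [h3, piFun_even lam mu s (1+m) (by omega), piFun_odd lam mu s (1+m) (by omega),
      piFun_odd lam mu s (2+m) (by omega), ← hpdef]
    field_simp [hlam.ne', hDpos.ne', hD1pos.ne']
    linear_combination (-p^(1+m))*hQ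
  · intro n hn
    obtain ⟨m, rfl⟩ : ∃ m, n = 2 + m := ⟨n - 2, by omega⟩
    have h4 : 2*(2+m)-2 = 2*(1+m) := by omega
    rw [h4, piFun_even lam mu s (2+m) (by omega), piFun_odd lam mu s (2+m) (by omega),
      piFun_even lam mu s (1+m) (by omega), ← hpdef]
    field_simp [hlam.ne', hDpos.ne', hD1pos.ne']
    ring
end
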